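/- arXiv:2401.11189 — 3 statements merged into one kernel-verified Lean document; each statement's English description precedes it below -/
import Mathlib

section
/- Let 𝔤 ⊆ ℝ^{n×n} be a linear subspace and π_𝔤 the orthogonal projection onto 𝔤 for the Frobenius inner product. Let A : ℝ → ℝ^{n×n}, E_A : ℝ → ℝ^{n×n}, E_b : ℝ → 𝔤 be differentiable and satisfy Ė_A = -k₁E_A - A E_b and Ė_b = k₂ π_𝔤(Aᵀ E_A) with k₁, k₂ > 0. Then the function V(t) = (k₂/2)‖E_A(t)‖² + (1/2)‖E_b(t)‖² satisfies V̇(t) = -k₁k₂‖E_A(t)‖² ≤ 0, where ‖·‖ is the Frobenius norm. -/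
open Matrix

attribute [local instance] Matrix.frobeniusSeminormedAddCommGroup
  Matrix.frobeniusNormedAddCommGroup Matrix.frobeniusNormedSpace

/-- Frobenius inner product `⟨A, B⟩ = trace (Aᵀ B)`. -/
noncomputable def frobInner {n : ℕ} (A B : Matrix (Fin n) (Fin n) ℝ) : ℝ :=
  (Aᵀ * B).trace

namespace FrobAux

lemma frobInner_eq_sum {n : ℕ} (A B : Matrix (Fin n) (Fin n) ℝ) :
    frobInner A B = ∑ i, ∑ j, A i j * B i j := by
  simp only [frobInner, Matrix.trace, Matrix.diag, Matrix.mul_apply,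
    Matrix.transpose_apply]
  rw [Finset.sum_comm]

lemma frobInner_comm {n : ℕ} (A B : Matrix (Fin n) (Fin n) ℝ) :
    frobInner A B = frobInner B A := by
  simp only [frobInner_eq_sum, mul_comm]

lemma frobInner_sub_left {n : ℕ} (A B C : Matrix (Fin n) (Fin n) ℝ) :
    frobInner (A - B) C = frobInner A C - frobInner B C := by
  simp [frobInner_eq_sum, sub_mul, Finset.sum_sub_distrib]

lemma frobInner_sub_right {n : ℕ} (A B C : Matrix (Fin n) (Fin n) ℝ) :
    frobInner A (B - C) = frobInner A B - frobInner A C := by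
  simp [frobInner_eq_sum, mul_sub, Finset.sum_sub_distrib]

lemma frobInner_smul_right {n : ℕ} (c : ℝ) (A B : Matrix (Fin n) (Fin n) ℝ) :
    frobInner A (c • B) = c * frobInner A B := by
  simp [frobInner_eq_sum, Finset.mul_sum, mul_left_comm]

lemma frobInner_neg_right {n : ℕ} (A B : Matrix (Fin n) (Fin n) ℝ) :
    frobInner A (-B) = -frobInner A B := by
  simp [frobInner_eq_sum]

lemma frob_norm_sq {n : ℕ} (X : Matrix (Fin n) (Fin n) ℝ) :
    ‖X‖ ^ 2 = ∑ i, ∑ j, (X i j) ^ 2 := by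
  rw [Matrix.frobenius_norm_def]
  have h : (0:ℝ) ≤ ∑ i, ∑ j, ‖X i j‖ ^ (2:ℝ) := by positivity
  rw [← Real.rpow_natCast ((∑ i, ∑ j, ‖X i j‖ ^ (2:ℝ)) ^ (1/2:ℝ)) 2,
    ← Real.rpow_mul h]
  norm_num

lemma frobInner_self {n : ℕ} (X : Matrix (Fin n) (Fin n) ℝ) :
    frobInner X X = ‖X‖ ^ 2 := by
  rw [frob_norm_sq, frobInner_eq_sum]
  simp [sq]

lemma frobInner_mul {n : ℕ} (X A B : Matrix (Fin n) (Fin n) ℝ) :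
    frobInner X (A * B) = frobInner (Aᵀ * X) B := by
  simp [frobInner, Matrix.transpose_mul, Matrix.mul_assoc]

noncomputable def evalCLM {n : ℕ} (i j : Fin n) :
    Matrix (Fin n) (Fin n) ℝ →L[ℝ] ℝ :=
  LinearMap.toContinuousLinearMap
    { toFun := fun X => X i j
      map_add' := fun _ _ => rfl
      map_smul' := fun _ _ => rfl }

lemma hasDerivAt_entry {n : ℕ} {E : ℝ → Matrix (Fin n) (Fin n) ℝ}
    {E' : Matrix (Fin n) (Fin n) ℝ} {t : ℝ} (h : HasDerivAt E E' t)
    (i j : Fin n) : HasDerivAt (fun s => E s i j) (E' i j) t :=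
  ((evalCLM i j).hasFDerivAt.comp_hasDerivAt t h :)

lemma hasDerivAt_norm_sq {n : ℕ} {E : ℝ → Matrix (Fin n) (Fin n) ℝ}
    {E' : Matrix (Fin n) (Fin n) ℝ} {t : ℝ} (h : HasDerivAt E E' t) :
    HasDerivAt (fun s => ‖E s‖ ^ 2) (2 * frobInner (E t) E') t := by
  have key : HasDerivAt (fun s => ∑ i, ∑ j, (E s i j) ^ 2)
      (∑ i : Fin n, ∑ j : Fin n, 2 * E t i j * E' i j) t := by
    apply HasDerivAt.fun_sum; intro i _
    apply HasDerivAt.fun_sum; intro j _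
    have := (hasDerivAt_entry h i j).fun_pow 2
    simpa using this
  have heq : (fun s => ‖E s‖ ^ 2) = fun s => ∑ i, ∑ j, (E s i j) ^ 2 := by
    funext s; exact frob_norm_sq (E s)
  rw [heq]
  convert key using 1
  rw [frobInner_eq_sum, Finset.mul_sum]
  congr 1; ext i
  rw [Finset.mul_sum]
  congr 1; ext j; ring

end FrobAux

open FrobAux in
/-- Along the error dynamics `Ė_A = -k₁ E_A - A E_b`, `Ė_b = k₂ π_𝔤(Aᵀ E_A)` with
`k₁, k₂ > 0` and `E_b(t) ∈ 𝔤`, the Lyapunov function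
`V(t) = (k₂/2)‖E_A(t)‖² + (1/2)‖E_b(t)‖²` (Frobenius norm) satisfies
`V̇(t) = -k₁ k₂ ‖E_A(t)‖² ≤ 0`. -/
theorem stmt2 {n : ℕ} (𝔤 : Submodule ℝ (Matrix (Fin n) (Fin n) ℝ))
    (π : Matrix (Fin n) (Fin n) ℝ → Matrix (Fin n) (Fin n) ℝ)
    (hπ_mem : ∀ X, π X ∈ 𝔤)
    (hπ_orth : ∀ X, ∀ w ∈ 𝔤, frobInner (X - π X) w = 0)
    (k₁ k₂ : ℝ) (hk₁ : 0 < k₁) (hk₂ : 0 < k₂)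
    (A E_A E_b : ℝ → Matrix (Fin n) (Fin n) ℝ)
    (hEb_mem : ∀ t, E_b t ∈ 𝔤)
    (hEA : ∀ t, HasDerivAt E_A (-(k₁ • E_A t) - A t * E_b t) t)
    (hEb : ∀ t, HasDerivAt E_b (k₂ • π ((A t)ᵀ * E_A t)) t)
    (t : ℝ) :
    HasDerivAt (fun s => k₂ / 2 * ‖E_A s‖ ^ 2 + 1 / 2 * ‖E_b s‖ ^ 2)
      (-(k₁ * k₂ * ‖E_A t‖ ^ 2)) t ∧ -(k₁ * k₂ * ‖E_A t‖ ^ 2) ≤ 0 := by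
  constructor
  · have h1 := (hasDerivAt_norm_sq (hEA t)).const_mul (k₂ / 2)
    have h2 := (hasDerivAt_norm_sq (hEb t)).const_mul (1 / 2 : ℝ)
    have hsum := h1.add h2
    have horth : frobInner (π ((A t)ᵀ * E_A t)) (E_b t)
        = frobInner ((A t)ᵀ * E_A t) (E_b t) := by
      have := hπ_orth ((A t)ᵀ * E_A t) (E_b t) (hEb_mem t)
      rw [frobInner_sub_left] at this
      linarith
    have hD : k₂ / 2 * (2 * frobInner (E_A t) (-(k₁ • E_A t) - A t * E_b t))
        + 1 / 2 * (2 * frobInner (E_b t) (k₂ • π ((A t)ᵀ * E_A t)))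
        = -(k₁ * k₂ * ‖E_A t‖ ^ 2) := by
      rw [frobInner_sub_right, frobInner_neg_right, frobInner_smul_right,
        frobInner_smul_right, frobInner_self, frobInner_mul,
        frobInner_comm (E_b t), horth]
      ring
    rw [← hD]
    exact hsum
  · have : 0 ≤ k₁ * k₂ * ‖E_A t‖ ^ 2 := by positivity
    linarith
end

section
/- Under the error dynamics Ė_A = -k₁E_A - AE_b, Ė_b = k₂π_𝔤(AᵀE_A) with k₁,k₂ > 0, the quantities ‖E_A(t)‖ and ‖E_b(t)‖ are bounded for all t ≥ 0, with (k₂/2)‖E_A(t)‖² + (1/2)‖E_b(t)‖² ≤ (k₂/2)‖E_A(0)‖² + (1/2)‖E_b(0)‖² for all t ≥ 0. -/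
open Matrix

attribute [local instance] Matrix.frobeniusSeminormedAddCommGroup
  Matrix.frobeniusNormedAddCommGroup Matrix.frobeniusNormedSpace

lemma frobInner_eq {n : ℕ} (X Y : Matrix (Fin n) (Fin n) ℝ) :
    frobInner X Y = ∑ j, ∑ i, X i j * Y i j := by
  simp [frobInner, Matrix.trace, Matrix.mul_apply, Matrix.diag, Matrix.transpose_apply]

lemma frobInner_self {n : ℕ} (X : Matrix (Fin n) (Fin n) ℝ) :
    frobInner X X = ‖X‖ ^ 2 := by
  rw [frobInner_eq, Matrix.frobenius_norm_def, ← Real.rpow_natCast _ 2,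
    ← Real.rpow_mul (by positivity)]
  norm_num
  rw [Finset.sum_comm]
  simp [sq]

lemma frobInner_self_nonneg {n : ℕ} (X : Matrix (Fin n) (Fin n) ℝ) :
    0 ≤ frobInner X X := by
  rw [frobInner_self]; positivity

lemma frobInner_symm {n : ℕ} (X Y : Matrix (Fin n) (Fin n) ℝ) :
    frobInner X Y = frobInner Y X := by
  simp [frobInner_eq, mul_comm]

lemma frobInner_smul_right {n : ℕ} (c : ℝ) (X Y : Matrix (Fin n) (Fin n) ℝ) :
    frobInner X (c • Y) = c * frobInner X Y := by
  simp [frobInner, Matrix.mul_smul]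

lemma frobInner_sub_right {n : ℕ} (X Y Z : Matrix (Fin n) (Fin n) ℝ) :
    frobInner X (Y - Z) = frobInner X Y - frobInner X Z := by
  simp [frobInner, Matrix.mul_sub]

lemma frobInner_sub_left {n : ℕ} (X Y Z : Matrix (Fin n) (Fin n) ℝ) :
    frobInner (X - Y) Z = frobInner X Z - frobInner Y Z := by
  simp [frobInner, Matrix.transpose_sub, Matrix.sub_mul]

lemma frobInner_neg_right {n : ℕ} (X Y : Matrix (Fin n) (Fin n) ℝ) :
    frobInner X (-Y) = -frobInner X Y := by
  simp [frobInner]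

lemma frobInner_transpose_mul {n : ℕ} (A X Y : Matrix (Fin n) (Fin n) ℝ) :
    frobInner (Aᵀ * X) Y = frobInner X (A * Y) := by
  simp [frobInner, Matrix.transpose_mul, Matrix.mul_assoc]

/-- entry evaluation as a continuous linear map -/
noncomputable def entryCLM {n : ℕ} (i j : Fin n) :
    Matrix (Fin n) (Fin n) ℝ →L[ℝ] ℝ :=
  LinearMap.toContinuousLinearMap
    { toFun := fun M => M i j
      map_add' := fun _ _ => rfl
      map_smul' := fun _ _ => rfl }

lemma hasDerivAt_entry {n : ℕ} {M : ℝ → Matrix (Fin n) (Fin n) ℝ}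
    {M' : Matrix (Fin n) (Fin n) ℝ} {t : ℝ} (h : HasDerivAt M M' t) (i j : Fin n) :
    HasDerivAt (fun s => M s i j) (M' i j) t := by
  have := (entryCLM i j).hasFDerivAt.comp_hasDerivAt t h
  exact this

lemma hasDerivAt_frobInner_self {n : ℕ} {M : ℝ → Matrix (Fin n) (Fin n) ℝ}
    {M' : Matrix (Fin n) (Fin n) ℝ} {t : ℝ} (h : HasDerivAt M M' t) :
    HasDerivAt (fun s => frobInner (M s) (M s)) (2 * frobInner (M t) M') t := by
  have key : HasDerivAt (fun s => ∑ j, ∑ i, M s i j * M s i j)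
      (∑ j : Fin n, ∑ i : Fin n, (M' i j * M t i j + M t i j * M' i j)) t := by
    apply HasDerivAt.fun_sum
    intro j _
    apply HasDerivAt.fun_sum
    intro i _
    exact (hasDerivAt_entry h i j).mul (hasDerivAt_entry h i j)
  have : (fun s => frobInner (M s) (M s)) = fun s => ∑ j, ∑ i, M s i j * M s i j := by
    funext s; exact frobInner_eq _ _
  rw [this]
  convert key using 1
  rw [frobInner_eq, Finset.mul_sum]
  refine Finset.sum_congr rfl fun j _ => ?_
  rw [Finset.mul_sum]
  exact Finset.sum_congr rfl fun i _ => by ring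

/-- Under the error dynamics `Ė_A = -k₁ E_A - A E_b`, `Ė_b = k₂ π_𝔤(Aᵀ E_A)` with
`k₁, k₂ > 0`, the quantities `‖E_A(t)‖` and `‖E_b(t)‖` are bounded on `[0, ∞)`:
`(k₂/2)‖E_A(t)‖² + (1/2)‖E_b(t)‖² ≤ (k₂/2)‖E_A(0)‖² + (1/2)‖E_b(0)‖²` for all `t ≥ 0`. -/
theorem stmt3 {n : ℕ} (𝔤 : Submodule ℝ (Matrix (Fin n) (Fin n) ℝ))
    (π : Matrix (Fin n) (Fin n) ℝ → Matrix (Fin n) (Fin n) ℝ)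
    (hπ_mem : ∀ X, π X ∈ 𝔤)
    (hπ_orth : ∀ X, ∀ w ∈ 𝔤, frobInner (X - π X) w = 0)
    (k₁ k₂ : ℝ) (hk₁ : 0 < k₁) (hk₂ : 0 < k₂)
    (A E_A E_b : ℝ → Matrix (Fin n) (Fin n) ℝ)
    (hEb_mem : ∀ t, 0 ≤ t → E_b t ∈ 𝔤)
    (hEA : ∀ t, 0 ≤ t → HasDerivAt E_A (-(k₁ • E_A t) - A t * E_b t) t)
    (hEb : ∀ t, 0 ≤ t → HasDerivAt E_b (k₂ • π ((A t)ᵀ * E_A t)) t) :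
    ∀ t, 0 ≤ t →
      k₂ / 2 * ‖E_A t‖ ^ 2 + 1 / 2 * ‖E_b t‖ ^ 2 ≤
        k₂ / 2 * ‖E_A 0‖ ^ 2 + 1 / 2 * ‖E_b 0‖ ^ 2 := by
  set V : ℝ → ℝ := fun t =>
    k₂ / 2 * frobInner (E_A t) (E_A t) + 1 / 2 * frobInner (E_b t) (E_b t) with hV
  have hderiv : ∀ t, 0 ≤ t →
      HasDerivAt V (-(k₁ * k₂) * frobInner (E_A t) (E_A t)) t := by
    intro t ht
    have h1 := (hasDerivAt_frobInner_self (hEA t ht)).const_mul (k₂ / 2)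
    have h2 := (hasDerivAt_frobInner_self (hEb t ht)).const_mul ((1:ℝ) / 2)
    have h := h1.add h2
    convert h using 1
    · rfl
    · rfl
    · rfl
    have e1 : frobInner (E_A t) (-(k₁ • E_A t) - A t * E_b t)
        = -(k₁ * frobInner (E_A t) (E_A t)) - frobInner (E_A t) (A t * E_b t) := by
      rw [frobInner_sub_right, frobInner_neg_right, frobInner_smul_right]
    have e2 : frobInner (E_b t) (k₂ • π ((A t)ᵀ * E_A t))
        = k₂ * frobInner (E_A t) (A t * E_b t) := by
      rw [frobInner_smul_right]
      congr 1
      have horth := hπ_orth ((A t)ᵀ * E_A t) (E_b t) (hEb_mem t ht)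
      rw [frobInner_sub_left, sub_eq_zero] at horth
      rw [frobInner_symm, ← horth, frobInner_transpose_mul]
    rw [e1, e2]; ring
  have hanti : AntitoneOn V (Set.Ici (0:ℝ)) := by
    apply antitoneOn_of_deriv_nonpos (convex_Ici 0)
    · exact fun s hs => (hderiv s hs).continuousAt.continuousWithinAt
    · rw [interior_Ici]
      exact fun s hs => (hderiv s (le_of_lt hs)).differentiableAt.differentiableWithinAt
    · rw [interior_Ici]
      intro s hs
      rw [(hderiv s (le_of_lt hs)).deriv]
      have := frobInner_self_nonneg (E_A s)
      nlinarith [mul_nonneg (mul_pos hk₁ hk₂).le this]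
  intro t ht
  have := hanti (Set.self_mem_Ici) ht ht
  simpa [hV, frobInner_self] using this
end

section
/- Let V : [0,∞) → ℝ be differentiable, bounded below, with V̇ uniformly continuous and V̇(t) ≤ 0 for all t. Then V̇(t) → 0 as t → ∞ (Barbalat's lemma for monotone Lyapunov functions). -/
open Filter

/-- Barbalat's lemma for monotone Lyapunov functions: if `V : [0,∞) → ℝ` is
differentiable, bounded below, nonpositive-derivative (hence nonincreasing), and `V̇`
is uniformly continuous on `[0,∞)`, then `V̇(t) → 0` as `t → ∞`. -/
theorem stmt4 (V : ℝ → ℝ)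
    (hdiff : ∀ t ∈ Set.Ici (0 : ℝ), DifferentiableAt ℝ V t)
    (hbdd : BddBelow (V '' Set.Ici (0 : ℝ)))
    (huc : UniformContinuousOn (deriv V) (Set.Ici (0 : ℝ)))
    (hneg : ∀ t ∈ Set.Ici (0 : ℝ), deriv V t ≤ 0) :
    Tendsto (deriv V) atTop (nhds 0) := by
  have hcont : ContinuousOn V (Set.Ici 0) := fun t ht =>
    (hdiff t ht).continuousAt.continuousWithinAt
  have hant : AntitoneOn V (Set.Ici (0:ℝ)) := by
    apply antitoneOn_of_deriv_nonpos (convex_Ici 0) hcont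
    · intro t ht
      rw [interior_Ici] at ht
      exact (hdiff t (Set.mem_Ici.mpr (le_of_lt (Set.mem_Ioi.mp ht)))).differentiableWithinAt
    · intro t ht
      rw [interior_Ici] at ht
      exact hneg t (Set.mem_Ici.mpr (le_of_lt (Set.mem_Ioi.mp ht)))
  set W : ℝ → ℝ := fun t => V (max t 0) with hW
  have hantW : Antitone W := fun a b hab =>
    hant (le_max_right a 0) (le_max_right b 0) (max_le_max hab le_rfl)
  have hbddW : BddBelow (Set.range W) := hbdd.mono (by
    rintro _ ⟨t, rfl⟩; exact ⟨max t 0, le_max_right t 0, rfl⟩)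
  have hVW : Tendsto V atTop (nhds (⨅ i, W i)) := by
    apply (tendsto_atTop_ciInf hantW hbddW).congr'
    filter_upwards [eventually_ge_atTop (0:ℝ)] with t ht
    simp [hW, max_eq_left ht]
  set L := ⨅ i, W i
  rw [Metric.tendsto_atTop]
  intro ε hε
  obtain ⟨δ, hδ, hδ'⟩ := Metric.uniformContinuousOn_iff.mp huc (ε/2) (by linarith)
  obtain ⟨N, hN⟩ := Metric.tendsto_atTop.mp hVW (ε*δ/8) (by positivity)
  refine ⟨max N 0, fun t ht => ?_⟩
  have ht0 : (0:ℝ) ≤ t := le_trans (le_max_right N 0) ht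
  have htN : N ≤ t := le_trans (le_max_left N 0) ht
  by_contra hcon
  push_neg at hcon
  have hd0 : deriv V t ≤ 0 := hneg t ht0
  have hdt : deriv V t ≤ -ε := by
    rw [Real.dist_eq, sub_zero, abs_of_nonpos hd0] at hcon
    linarith
  have hlt : t < t + δ/2 := by linarith
  obtain ⟨c, hc, hceq⟩ := exists_deriv_eq_slope V hlt
    (hcont.mono (fun x hx => le_trans ht0 hx.1))
    (fun x hx => ((hdiff x (le_trans ht0 (le_of_lt hx.1))).differentiableWithinAt))
  have hc0 : (0:ℝ) ≤ c := le_trans ht0 hc.1.le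
  have hdist : dist c t < δ := by
    rw [Real.dist_eq, abs_of_nonneg (by linarith [hc.1])]
    linarith [hc.2]
  have h1 : dist (deriv V c) (deriv V t) < ε/2 := hδ' c hc0 t ht0 hdist
  have h2 : deriv V c ≤ -ε/2 := by
    rw [Real.dist_eq] at h1
    have := abs_lt.mp h1
    linarith [this.2]
  have hden : t + δ/2 - t = δ/2 := by ring
  have h3 : V (t+δ/2) - V t ≤ -ε/2 * (δ/2) := by
    rw [hden] at hceq
    rw [eq_div_iff (by positivity : (δ:ℝ)/2 ≠ 0)] at hceq
    rw [← hceq]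
    nlinarith
  have h4 : dist (V (t+δ/2)) L < ε*δ/8 := hN _ (by linarith)
  have h5 : dist (V t) L < ε*δ/8 := hN t htN
  rw [Real.dist_eq] at h4 h5
  have h4' := abs_lt.mp h4
  have h5' := abs_lt.mp h5
  nlinarith [h4'.1, h5'.2]
end
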